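/- Let ℓ ≥ 2 be an integer and L > 0 a constant, and let F be a graph with maximum degree Δ such that c_k(u,v;F) ≤ L for every edge uv of F and every 3 ≤ k ≤ 2ℓ. Then for every 1 ≤ s ≤ ℓ-1 and all distinct vertices u, v of F, the number of composed paths of length 2s with endpoints u and v is at most Δ^{s-1} · ((sL+1)^s + 1). -/

import Mathlib

/-- `c_k(u,v;G)`: the number of cycles of length `k` in `G` containing the edge `uv`.
Each such cycle corresponds to a unique path from `u` to `v` of length `k-1`
avoiding the edge `uv`. -/
noncomputable def cyclesThroughEdge {V : Type} (G : SimpleGraph V) (k : ℕ) (u v : V) : ℕ :=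
  Nat.card {p : G.Walk u v // p.IsPath ∧ p.length = k - 1 ∧ s(u, v) ∉ p.edges}

/-- The number of composed paths of length `2s` from `u` to `v`: paths `u … w … v` whose two
halves (from the midpoint `w` to the two endpoints) are shortest paths of length `s`. -/
noncomputable def numComposedPaths {V : Type} (G : SimpleGraph V) (s : ℕ) (u v : V) : ℕ :=
  Nat.card {x : Σ w : V, G.Walk w u × G.Walk w v //
    (x.2.1.reverse.append x.2.2).IsPath ∧
    x.2.1.length = s ∧ x.2.2.length = s ∧
    G.dist x.1 u = s ∧ G.dist x.1 v = s}

set_option linter.unusedSectionVars false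
namespace Aux16
open SimpleGraph Walk Finset Function

variable {V : Type} [Fintype V] [DecidableEq V] {G : SimpleGraph V} [DecidableRel G.Adj]

lemma finite_of_length_le {u v : V} {P : G.Walk u v → Prop} {n : ℕ}
    (h : ∀ p, P p → p.length ≤ n) : Finite {p : G.Walk u v // P p} := by
  haveI := G.fintypeSubtypeWalkLengthLT u v (n+1)
  exact Finite.of_injective
    (fun x => (⟨x.1, Nat.lt_succ_of_le (h _ x.2)⟩ : {p : G.Walk u v // p.length < n + 1}))
    (fun a b hab => Subtype.ext (by simpa using congrArg Subtype.val hab))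

lemma nat_card_sigma {ι : Type} [Fintype ι] (f : ι → Type) [∀ i, Finite (f i)] :
    Nat.card (Σ i, f i) = ∑ i, Nat.card (f i) := by
  haveI : ∀ i, Fintype (f i) := fun i => Fintype.ofFinite _
  simp [Nat.card_eq_fintype_card, Fintype.card_sigma]

/-- On a geodesic, the tail from any vertex is a geodesic. -/
lemma length_dropUntil_eq_dist {b x : V} (p : G.Walk b x) (hp : p.length = G.dist b x)
    {e : V} (he : e ∈ p.support) : (p.dropUntil e he).length = G.dist e x := by
  have hsplit := p.take_spec he
  have hlen : (p.takeUntil e he).length + (p.dropUntil e he).length = p.length := by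
    conv_rhs => rw [← hsplit]
    rw [Walk.length_append]
  refine le_antisymm ?_ (dist_le _)
  obtain ⟨q, hq⟩ := (p.dropUntil e he).reachable.exists_walk_length_eq_dist
  have h2 : G.dist b x ≤ (p.takeUntil e he).length + G.dist e x := by
    calc G.dist b x ≤ ((p.takeUntil e he).append q).length := dist_le _
    _ = _ := by rw [Walk.length_append, hq]
  omega

/-- First vertex of `P` lying on `R`. -/
lemma takeUntil_start {u w : V} (p : G.Walk u w) (h : u ∈ p.support) :
    (p.takeUntil u h).length = 0 := by
  cases p with
  | nil => simp [Walk.takeUntil]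
  | cons r p => simp [Walk.takeUntil]

lemma mem_support_length_zero {u w : V} (p : G.Walk u w) (hp : p.length = 0) :
    ∀ f ∈ p.support, f = u := by
  cases p with
  | nil => simp
  | cons r p => simp at hp

lemma exists_first_meet {b c x : V} (P : G.Walk b x) (R : G.Walk c x) :
    ∃ (e : V) (hP : e ∈ P.support) (hR : e ∈ R.support),
      ∀ f ∈ (P.takeUntil e hP).support, f = e ∨ f ∉ R.support := by
  induction P with
  | nil =>
    refine ⟨_, Walk.start_mem_support _, Walk.end_mem_support R, ?_⟩
    intro f hf
    exact Or.inl (mem_support_length_zero _ (takeUntil_start _ _) f hf)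
  | @cons u v x h' P' ih =>
    by_cases hu : u ∈ R.support
    · refine ⟨u, Walk.start_mem_support _, hu, ?_⟩
      intro f hf
      exact Or.inl (mem_support_length_zero _ (takeUntil_start _ _) f hf)
    · obtain ⟨e, hP', hR, hcond⟩ := ih R
      have he : e ∈ (Walk.cons h' P').support := by
        rw [Walk.support_cons]; exact List.mem_cons_of_mem _ hP'
      refine ⟨e, he, hR, ?_⟩
      have hne : u ≠ e := fun h => hu (h ▸ hR)
      have hrw : (Walk.cons h' P').takeUntil e he
          = Walk.cons h' (P'.takeUntil e hP') := by
        simp [Walk.takeUntil, hne]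
      intro f hf
      rw [hrw, Walk.support_cons, List.mem_cons] at hf
      rcases hf with rfl|hf
      · right; exact hu
      · exact hcond f hf

def splitFirst {a b : V} : (q : G.Walk a b) → (h : q.length ≠ 0) → Σ z : V, G.Walk z b
  | .cons _ r, _ => ⟨_, r⟩
  | .nil, h => absurd rfl h

lemma splitFirst_spec {a b : V} (q : G.Walk a b) (h : q.length ≠ 0) :
    ∃ hadj : G.Adj a (splitFirst q h).1, q = Walk.cons hadj (splitFirst q h).2 := by
  cases q with
  | nil => exact absurd rfl h
  | cons h' r => exact ⟨h', rfl⟩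


section Core
variable (G) in
/-- The bucket of cycles of length `2j+4` through the edge `t w0`, as paths. -/
def CS (t w0 : V) (j : ℕ) : Type :=
  {p : G.Walk t w0 // p.IsPath ∧ p.length = (2*j+4) - 1 ∧ s(t, w0) ∉ p.edges}

lemma card_CS (t w0 : V) (j : ℕ) : Nat.card (CS G t w0 j) = cyclesThroughEdge G (2*j+4) t w0 := rfl

instance CS_finite (t w0 : V) (j : ℕ) : Finite (CS G t w0 j) :=
  finite_of_length_le (n := 2*j+3) (fun p hp => by omega)

lemma core (ℓ : ℕ) (L : ℝ) (hL : 0 < L)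
    (hc : ∀ u v, G.Adj u v → ∀ k, 3 ≤ k → k ≤ 2*ℓ → (cyclesThroughEdge G k u v : ℝ) ≤ L)
    (t x : V) (n : ℕ) (hn1 : 1 ≤ n) (hnl : n + 1 ≤ ℓ)
    {A : Type} [Finite A] (w : A → V) (hw : Function.Injective w)
    (Q : ∀ a : A, G.Walk (w a) x)
    (hadj : ∀ a, G.Adj t (w a))
    (hlen : ∀ a, (Q a).length = n)
    (hdist : ∀ a, G.dist (w a) x = n)
    (ht : ∀ a, t ∉ (Q a).support) :
    (Nat.card A : ℝ) ≤ n * L + 1 := by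
  classical
  rcases isEmpty_or_nonempty A with hA | hA
  · rw [Nat.card_of_isEmpty, Nat.cast_zero]
    positivity
  obtain ⟨a0⟩ := hA
  have hQpath : ∀ a : A, (Q a).IsPath := fun a =>
    (Q a).isPath_of_length_eq_dist (by rw [hlen, hdist])
  have key : ∀ a : A, a ≠ a0 → ∃ (j : Fin n) (R : G.Walk t (w a0)),
      R.IsPath ∧ R.length = (2*(j:ℕ)+4) - 1 ∧ s(t, w a0) ∉ R.edges ∧ R.getVert 1 = w a := by
    intro a ha
    have hwne : w a ≠ w a0 := fun h => ha (hw h)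
    obtain ⟨e, hP, hRm, hfirst⟩ := exists_first_meet (Q a) (Q a0)
    set c1 := (Q a).takeUntil e hP with hc1
    set c0 := (Q a0).takeUntil e hRm with hc0
    have hgr1 : ((Q a).dropUntil e hP).length = G.dist e x :=
      length_dropUntil_eq_dist _ (by rw [hlen, hdist]) _
    have hgr0 : ((Q a0).dropUntil e hRm).length = G.dist e x :=
      length_dropUntil_eq_dist _ (by rw [hlen, hdist]) _
    have hsum1 : c1.length + ((Q a).dropUntil e hP).length = n := by
      have h := congrArg Walk.length ((Q a).take_spec hP)
      rw [Walk.length_append] at h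
      rw [← hlen a]
      exact h
    have hsum0 : c0.length + ((Q a0).dropUntil e hRm).length = n := by
      have h := congrArg Walk.length ((Q a0).take_spec hRm)
      rw [Walk.length_append] at h
      rw [← hlen a0]
      exact h
    have hceq : c0.length = c1.length := by omega
    have hcpos : 1 ≤ c1.length := by
      rcases Nat.eq_zero_or_pos c1.length with h0 | h
      · exfalso
        have he1 : w a = e := Walk.eq_of_length_eq_zero h0
        have he0 : w a0 = e := Walk.eq_of_length_eq_zero (p := c0) (by omega)
        exact hwne (he1.trans he0.symm)
      · exact h
    have hcle : c1.length ≤ n := by omega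
    -- membership facts
    have hsub1 : c1.support ⊆ (Q a).support := Walk.support_takeUntil_subset _ _
    have hsub0 : c0.support ⊆ (Q a0).support := Walk.support_takeUntil_subset _ _
    have hc1path : c1.IsPath := (hQpath a).takeUntil _
    have hc0path : c0.IsPath := (hQpath a0).takeUntil _
    -- the appended walk is a path
    have happ : (c1.append c0.reverse).IsPath := by
      rw [Walk.isPath_def, Walk.support_append, List.nodup_append']
      refine ⟨hc1path.support_nodup, ?_, ?_⟩
      · have := hc0path.reverse.support_nodup
        rw [(c0.reverse).support_eq_cons] at this
        exact this.of_cons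
      · intro f hf1 hf2
        have hrev := hc0path.reverse.support_nodup
        rw [(c0.reverse).support_eq_cons] at hrev
        have hfne : f ≠ e := by
          rintro rfl
          exact (List.nodup_cons.mp hrev).1 hf2
        have hf0 : f ∈ c0.support := by
          have : f ∈ c0.reverse.support := (c0.reverse).support_eq_cons ▸ List.mem_cons_of_mem _ hf2
          rwa [Walk.support_reverse, List.mem_reverse] at this
        rcases hfirst f hf1 with h | h
        · exact hfne h
        · exact h (hsub0 hf0)
    have htne : t ∉ (c1.append c0.reverse).support := by
      rw [Walk.mem_support_append_iff]
      rintro (h | h)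
      · exact ht a (hsub1 h)
      · rw [Walk.support_reverse, List.mem_reverse] at h
        exact ht a0 (hsub0 h)
    refine ⟨⟨c1.length - 1, by omega⟩, Walk.cons (hadj a) (c1.append c0.reverse), ?_, ?_, ?_, ?_⟩
    · rw [Walk.cons_isPath_iff]
      exact ⟨happ, htne⟩
    · rw [Walk.length_cons, Walk.length_append, Walk.length_reverse]
      simp only [Fin.val_mk]
      omega
    · intro hmem
      rw [Walk.edges_cons, List.mem_cons] at hmem
      rcases hmem with heq | hmem
      · exact hwne.symm (Sym2.congr_right.mp heq)
      · rw [Walk.edges_append, List.mem_append] at hmem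
        rcases hmem with hmem | hmem
        · exact ht a (hsub1 (c1.fst_mem_support_of_mem_edges hmem))
        · have := (c0.reverse).fst_mem_support_of_mem_edges hmem
          rw [Walk.support_reverse, List.mem_reverse] at this
          exact ht a0 (hsub0 this)
    · rw [Walk.getVert_cons_succ, Walk.getVert_zero]
  choose j R hR1 hR2 hR3 hR4 using key
  let ψ : {a : A // a ≠ a0} → Σ j' : Fin n, CS G t (w a0) (j' : ℕ) :=
    fun a => ⟨j a.1 a.2, ⟨R a.1 a.2, hR1 a.1 a.2, hR2 a.1 a.2, hR3 a.1 a.2⟩⟩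
  have hψ : Function.Injective ψ := by
    intro a b hab
    have h2 := congrArg (fun z : (Σ j' : Fin n, CS G t (w a0) (j' : ℕ)) =>
      z.snd.val.getVert 1) hab
    simp only [ψ] at h2
    rw [hR4 a.1 a.2, hR4 b.1 b.2] at h2
    exact Subtype.ext (hw h2)
  have hcard1 : Nat.card {a : A // a ≠ a0} ≤ ∑ j' : Fin n, Nat.card (CS G t (w a0) (j' : ℕ)) := by
    rw [← nat_card_sigma]
    exact Nat.card_le_card_of_injective ψ hψ
  have hoptinj : Function.Injective
      (fun a : A => dite (a = a0) (fun _ => (none : Option {a : A // a ≠ a0}))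
        (fun h => some ⟨a, h⟩)) := by
    intro a b hab
    by_cases h1 : a = a0 <;> by_cases h2 : b = a0
    · exact h1.trans h2.symm
    · simp only [dif_pos h1, dif_neg h2] at hab; exact absurd hab (by simp)
    · simp only [dif_neg h1, dif_pos h2] at hab; exact absurd hab (by simp)
    · simp only [dif_neg h1, dif_neg h2, Option.some.injEq, Subtype.mk.injEq] at hab
      exact hab
  have hcard2 : Nat.card A ≤ Nat.card {a : A // a ≠ a0} + 1 := by
    haveI : Fintype {a : A // a ≠ a0} := Fintype.ofFinite _
    calc Nat.card A ≤ Nat.card (Option {a : A // a ≠ a0}) :=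
          Nat.card_le_card_of_injective _ hoptinj
      _ = _ := by rw [Nat.card_eq_fintype_card, Nat.card_eq_fintype_card, Fintype.card_option]
  have hsum : (∑ j' : Fin n, (Nat.card (CS G t (w a0) (j' : ℕ)) : ℝ)) ≤ n * L := by
    calc ∑ j' : Fin n, (Nat.card (CS G t (w a0) (j' : ℕ)) : ℝ) ≤ ∑ _j' : Fin n, L := by
          apply Finset.sum_le_sum
          intro i _
          rw [card_CS]
          exact hc t (w a0) (hadj a0) _ (by omega) (by have := i.2; omega)
      _ = n * L := by simp [mul_comm]
  calc (Nat.card A : ℝ) ≤ (Nat.card {a : A // a ≠ a0} : ℝ) + 1 := by exact_mod_cast hcard2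
    _ ≤ (∑ j' : Fin n, (Nat.card (CS G t (w a0) (j' : ℕ)) : ℝ)) + 1 := by
        push_cast
        exact_mod_cast add_le_add_left (Nat.cast_le.mpr hcard1) (1:ℝ)
    _ ≤ n * L + 1 := by linarith
end Core

section SP

lemma card_walk_reverse (x y : V) (n : ℕ) :
    Nat.card {p : G.Walk x y // p.length = n} = Nat.card {q : G.Walk y x // q.length = n} :=
  Nat.card_congr
    ⟨fun p => ⟨p.1.reverse, by simp [p.2]⟩, fun q => ⟨q.1.reverse, by simp [q.2]⟩,
     fun p => Subtype.ext (Walk.reverse_reverse _),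
     fun q => Subtype.ext (Walk.reverse_reverse _)⟩

lemma walk_length_one_eq {x y : V} (p q : G.Walk x y) (hp : p.length = 1) (hq : q.length = 1) :
    p = q := by
  cases p with
  | nil => simp at hp
  | cons h p' =>
    cases p' with
    | cons h2 p'' => rw [Walk.length_cons, Walk.length_cons] at hp; omega
    | nil =>
      cases q with
      | nil => simp at hq
      | cons h' q' =>
        cases q' with
        | cons h'' q'' => rw [Walk.length_cons, Walk.length_cons] at hq; omega
        | nil => rfl

lemma card_walk_length_le_one {x y : V} {n : ℕ} (hn : n ≤ 1) :
    Nat.card {p : G.Walk x y // p.length = n} ≤ 1 := by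
  haveI : Subsingleton {p : G.Walk x y // p.length = n} := by
    constructor
    rintro ⟨p, hp⟩ ⟨q, hq⟩
    interval_cases n
    · have hxy := Walk.eq_of_length_eq_zero (p := p) hp
      subst hxy
      rw [Walk.length_eq_zero_iff, Walk.nil_iff_eq_nil] at hp hq
      rw [Subtype.mk.injEq, hp, hq]
    · exact Subtype.ext (walk_length_one_eq p q hp hq)
  rcases isEmpty_or_nonempty {p : G.Walk x y // p.length = n} with h | h
  · rw [Nat.card_of_isEmpty]
    omega
  · rw [Nat.card_unique]

lemma sp_bound (ℓ : ℕ) (L : ℝ) (hL : 0 < L)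
    (hc : ∀ u v : V, G.Adj u v → ∀ k, 3 ≤ k → k ≤ 2*ℓ → (cyclesThroughEdge G k u v : ℝ) ≤ L)
    (s : ℕ) (hs : s + 1 ≤ ℓ) :
    ∀ d, d ≤ s → ∀ x y : V, G.dist x y = d →
      (Nat.card {p : G.Walk x y // p.length = d} : ℝ) ≤ (s * L + 1) ^ (d - 1) := by
  have hsl : (0:ℝ) ≤ s * L + 1 := by positivity
  intro d
  induction d with
  | zero =>
    intro _ x y _
    calc (Nat.card {p : G.Walk x y // p.length = 0} : ℝ) ≤ 1 := by
          exact_mod_cast card_walk_length_le_one (by omega)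
      _ ≤ _ := by norm_num
  | succ d ih =>
    intro hds x y hdist
    rcases Nat.eq_zero_or_pos d with rfl | hd1
    · calc (Nat.card {p : G.Walk x y // p.length = 1} : ℝ) ≤ 1 := by
            exact_mod_cast card_walk_length_le_one (by omega)
        _ ≤ _ := by norm_num
    · rw [card_walk_reverse]
      classical
      have hdyx : G.dist y x = d + 1 := by rw [dist_comm]; exact hdist
      set Bfib : V → Type := fun z =>
        {r : G.Walk z x // r.length = d ∧ G.dist z x = d ∧ G.Adj y z ∧ y ∉ r.support} with hBfib
      haveI : ∀ z, Finite (Bfib z) := fun z =>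
        finite_of_length_le (n := d) (fun r hr => le_of_eq hr.1)
      have key : ∀ q : {q : G.Walk y x // q.length = d + 1},
          ∃ b : Σ z : V, Bfib z, ∃ hadj : G.Adj y b.1, q.1 = Walk.cons hadj b.2.1 := by
        rintro ⟨q, hq⟩
        have hq0 : q.length ≠ 0 := by omega
        obtain ⟨hadj, hcons⟩ := splitFirst_spec q hq0
        have hrlen : (splitFirst q hq0).2.length = d := by
          have hl := congrArg Walk.length hcons
          rw [Walk.length_cons] at hl
          omega
        have hqpath : q.IsPath := q.isPath_of_length_eq_dist (by rw [hq, hdyx])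
        have hynotin : y ∉ (splitFirst q hq0).2.support := by
          rw [hcons, Walk.cons_isPath_iff] at hqpath
          exact hqpath.2
        have hdzx : G.dist (splitFirst q hq0).1 x = d := by
          refine le_antisymm ?_ ?_
          · rw [← hrlen]; exact dist_le _
          · obtain ⟨mw, hmw⟩ := (splitFirst q hq0).2.reachable.exists_walk_length_eq_dist
            have hge : G.dist y x ≤ (Walk.cons hadj mw).length := dist_le _
            rw [Walk.length_cons, hmw, hdyx] at hge
            omega
        exact ⟨⟨(splitFirst q hq0).1, ⟨(splitFirst q hq0).2, hrlen, hdzx, hadj, hynotin⟩⟩,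
          hadj, hcons⟩
      choose Φ hΦ using key
      have hF : ∀ q, (fun b : Σ z : V, Bfib z =>
          if h : G.Adj y b.1 then some (Walk.cons h b.2.1) else (none : Option (G.Walk y x)))
            (Φ q) = some q.1 := by
        intro q
        obtain ⟨h1, hcons1⟩ := hΦ q
        simp only [dif_pos h1]
        rw [← hcons1]
      have hΦinj : Function.Injective Φ := by
        intro q q' he
        have h1 := hF q
        have h2 := hF q'
        rw [he] at h1
        rw [h2] at h1
        exact Subtype.ext (Option.some_injective _ h1.symm)
      have hcard : Nat.card {q : G.Walk y x // q.length = d+1} ≤ ∑ z : V, Nat.card (Bfib z) := by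
        rw [← nat_card_sigma]
        exact Nat.card_le_card_of_injective Φ hΦinj
      set P : V → Prop := fun z => Nonempty (Bfib z) with hPdef
      have hAcard : (Nat.card {z : V // P z} : ℝ) ≤ d * L + 1 := by
        apply core ℓ L hL hc y x d hd1 (by omega)
          (fun z : {z // P z} => z.1) (fun a b hab => Subtype.ext hab)
          (fun z => (Classical.choice z.2).1)
          ?_ ?_ ?_ ?_
        · intro z; exact (Classical.choice z.2).2.2.2.1
        · intro z; exact (Classical.choice z.2).2.1
        · intro z; exact (Classical.choice z.2).2.2.1
        · intro z; exact (Classical.choice z.2).2.2.2.2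
      have hper : ∀ z : V, P z → (Nat.card (Bfib z) : ℝ) ≤ (s*L+1)^(d-1) := by
        intro z hz
        obtain ⟨r0⟩ := hz
        have hdz : G.dist z x = d := r0.2.2.1
        calc (Nat.card (Bfib z) : ℝ) ≤ (Nat.card {r : G.Walk z x // r.length = d} : ℝ) := by
              exact_mod_cast Nat.card_le_card_of_injective
                (fun r : Bfib z => (⟨r.1, r.2.1⟩ : {r : G.Walk z x // r.length = d}))
                (fun a b hab => Subtype.ext (by simpa using congrArg Subtype.val hab))
          _ ≤ _ := ih (by omega) z x hdz
      have hsum : (∑ z : V, (Nat.card (Bfib z) : ℝ)) ≤ (d*L+1) * (s*L+1)^(d-1) := by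
        have h0 : ∀ z ∈ Finset.univ, z ∉ Finset.univ.filter P →
            (Nat.card (Bfib z) : ℝ) = 0 := by
          intro z _ hzn
          have hnp : ¬ P z := by
            intro hp
            exact hzn (Finset.mem_filter.mpr ⟨Finset.mem_univ z, hp⟩)
          haveI : IsEmpty (Bfib z) := not_nonempty_iff.mp hnp
          rw [Nat.card_of_isEmpty, Nat.cast_zero]
        calc (∑ z : V, (Nat.card (Bfib z) : ℝ))
            = ∑ z ∈ Finset.univ.filter P, (Nat.card (Bfib z) : ℝ) :=
              (Finset.sum_subset (Finset.filter_subset _ _) h0).symm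
          _ ≤ ∑ _z ∈ Finset.univ.filter P, (s*L+1)^(d-1) :=
              Finset.sum_le_sum (fun z hz => hper z (Finset.mem_filter.mp hz).2)
          _ = (Finset.univ.filter P).card * (s*L+1)^(d-1) := by
              rw [Finset.sum_const, nsmul_eq_mul]
          _ ≤ (d*L+1) * (s*L+1)^(d-1) := by
              apply mul_le_mul_of_nonneg_right _ (by positivity)
              have hfc : ((Finset.univ.filter P).card : ℝ) = (Nat.card {z : V // P z} : ℝ) := by
                rw [Nat.card_eq_fintype_card, Fintype.card_subtype]
              rw [hfc]
              exact hAcard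
      calc (Nat.card {q : G.Walk y x // q.length = d+1} : ℝ)
          ≤ ((∑ z : V, Nat.card (Bfib z) : ℕ) : ℝ) := by exact_mod_cast hcard
        _ = ∑ z : V, (Nat.card (Bfib z) : ℝ) := by push_cast; rfl
        _ ≤ (d*L+1) * (s*L+1)^(d-1) := hsum
        _ ≤ (s*L+1) * (s*L+1)^(d-1) := by
            apply mul_le_mul_of_nonneg_right _ (by positivity)
            have hdsr : (d:ℝ) ≤ s := by exact_mod_cast (by omega : d ≤ s)
            nlinarith [hL.le]
        _ = (s*L+1)^(d+1-1) := by
            rw [← pow_succ']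
            congr 1
            omega
end SP

section Count

lemma sigma_subtype_ext {v : V} {P : ∀ y : V, G.Walk y v → Prop}
    {a b : Σ y : V, {r : G.Walk y v // P y r}}
    (h : (⟨a.1, a.2.1⟩ : Σ y : V, G.Walk y v) = ⟨b.1, b.2.1⟩) : a = b := by
  obtain ⟨ya, ra, hra⟩ := a
  obtain ⟨yb, rb, hrb⟩ := b
  obtain ⟨h1, h2⟩ := Sigma.mk.inj_iff.mp h
  subst h1
  have h3 := eq_of_heq h2
  subst h3
  rfl

lemma count_walks_to (v : V) : ∀ n : ℕ,
    Nat.card (Σ y : V, {r : G.Walk y v // r.length = n}) ≤ G.maxDegree ^ n := by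
  intro n
  induction n with
  | zero =>
    rw [nat_card_sigma, pow_zero]
    calc ∑ y : V, Nat.card {r : G.Walk y v // r.length = 0}
        ≤ ∑ y : V, if y = v then 1 else 0 := by
          apply Finset.sum_le_sum
          intro y _
          by_cases h : y = v
          · rw [if_pos h]
            exact card_walk_length_le_one (by omega)
          · rw [if_neg h]
            haveI : IsEmpty {r : G.Walk y v // r.length = 0} :=
              ⟨fun r => h (Walk.eq_of_length_eq_zero r.2)⟩
            rw [Nat.card_of_isEmpty]
      _ = 1 := by simp
  | succ n ih =>
    classical
    have key : ∀ c : Σ y : V, {r : G.Walk y v // r.length = n+1},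
        ∃ b : Σ z : V, (G.neighborSet z) × {r' : G.Walk z v // r'.length = n},
          ∃ hadj : G.Adj (b.2.1 : V) b.1, c.1 = (b.2.1 : V) ∧
            HEq c.2.1 (Walk.cons hadj b.2.2.1) := by
      rintro ⟨y, r, hr⟩
      have hr0 : r.length ≠ 0 := by omega
      obtain ⟨hadj, hcons⟩ := splitFirst_spec r hr0
      have hlen : (splitFirst r hr0).2.length = n := by
        have hl := congrArg Walk.length hcons
        rw [Walk.length_cons] at hl
        omega
      exact ⟨⟨(splitFirst r hr0).1, ⟨⟨y, hadj.symm⟩, ⟨(splitFirst r hr0).2, hlen⟩⟩⟩,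
        hadj, rfl, heq_of_eq hcons⟩
    choose Ψ hΨ using key
    have hF : ∀ c, (fun b : Σ z : V, (G.neighborSet z) × {r' : G.Walk z v // r'.length = n} =>
        if h : G.Adj (b.2.1 : V) b.1 then some (⟨(b.2.1 : V), Walk.cons h b.2.2.1⟩ : Σ y : V, G.Walk y v)
        else none) (Ψ c) = some ⟨c.1, c.2.1⟩ := by
      intro c
      obtain ⟨hadj, h1, h2⟩ := hΨ c
      simp only [dif_pos hadj]
      congr 1
      exact Sigma.mk.inj_iff.mpr ⟨h1.symm, h2.symm⟩
    have hinj : Function.Injective Ψ := by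
      intro a b he
      have h1 := hF a
      have h2 := hF b
      rw [he] at h1
      rw [h2] at h1
      exact sigma_subtype_ext (Option.some_injective _ h1.symm)
    haveI : ∀ z : V, Finite ((G.neighborSet z) × {r' : G.Walk z v // r'.length = n}) := by
      intro z; infer_instance
    calc Nat.card (Σ y : V, {r : G.Walk y v // r.length = n+1})
        ≤ Nat.card (Σ z : V, (G.neighborSet z) × {r' : G.Walk z v // r'.length = n}) :=
          Nat.card_le_card_of_injective Ψ hinj
      _ = ∑ z : V, Nat.card ((G.neighborSet z) × {r' : G.Walk z v // r'.length = n}) :=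
          nat_card_sigma _
      _ = ∑ z : V, G.degree z * Nat.card {r' : G.Walk z v // r'.length = n} := by
          apply Finset.sum_congr rfl
          intro z _
          rw [Nat.card_prod, Nat.card_eq_fintype_card, G.card_neighborSet_eq_degree]
      _ ≤ ∑ z : V, G.maxDegree * Nat.card {r' : G.Walk z v // r'.length = n} := by
          apply Finset.sum_le_sum
          intro z _
          exact Nat.mul_le_mul_right _ (G.degree_le_maxDegree z)
      _ = G.maxDegree * ∑ z : V, Nat.card {r' : G.Walk z v // r'.length = n} := by
          rw [Finset.mul_sum]
      _ = G.maxDegree * Nat.card (Σ z : V, {r' : G.Walk z v // r'.length = n}) := by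
          rw [nat_card_sigma]
      _ ≤ G.maxDegree * G.maxDegree ^ n := Nat.mul_le_mul_left _ ih
      _ = G.maxDegree ^ (n+1) := by rw [pow_succ']

end Count

section Main

lemma main (ℓ : ℕ) (L : ℝ) (hL : 0 < L)
    (hc : ∀ u v : V, G.Adj u v → ∀ k, 3 ≤ k → k ≤ 2*ℓ → (cyclesThroughEdge G k u v : ℝ) ≤ L)
    (s : ℕ) (hs1 : 1 ≤ s) (hs2 : s + 1 ≤ ℓ) (u v : V) :
    (numComposedPaths G s u v : ℝ) ≤
      (G.maxDegree : ℝ) ^ (s - 1) * (((s:ℝ) * L + 1) ^ s + 1) := by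
  classical
  have hsl : (0:ℝ) ≤ (s:ℝ) * L + 1 := by positivity
  set B := (Σ y : V, {r : G.Walk y v // r.length = s - 1}) with hB
  set Fib : B → Type := fun b =>
    {c : Σ w : V, {p : G.Walk w u // p.length = s} //
      G.Adj c.1 b.1 ∧ G.dist c.1 u = s ∧ b.1 ∉ c.2.1.support} with hFib
  set T := {x : Σ w : V, G.Walk w u × G.Walk w v //
    (x.2.1.reverse.append x.2.2).IsPath ∧ x.2.1.length = s ∧ x.2.2.length = s ∧
    G.dist x.1 u = s ∧ G.dist x.1 v = s} with hT
  have hnum : numComposedPaths G s u v = Nat.card T := rfl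
  have key : ∀ x : T, ∃ (b : B) (f : Fib b) (hadj : G.Adj f.1.1 b.1),
      x.1 = ⟨f.1.1, (f.1.2.1, Walk.cons hadj b.2.1)⟩ := by
    rintro ⟨⟨w, p, q⟩, hpath, hplen, hqlen, hdu, hdv⟩
    dsimp only at hpath hplen hqlen hdu hdv
    have hq0 : q.length ≠ 0 := by omega
    obtain ⟨hadj, hcons⟩ := splitFirst_spec q hq0
    have hrlen : (splitFirst q hq0).2.length = s - 1 := by
      have hl := congrArg Walk.length hcons
      rw [Walk.length_cons] at hl
      omega
    have hynp : (splitFirst q hq0).1 ∉ p.support := by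
      have hnodup := hpath
      rw [Walk.isPath_def, Walk.support_append] at hnodup
      have hdisj := (List.nodup_append'.mp hnodup).2.2
      intro hmem
      refine hdisj (a := (splitFirst q hq0).1) ?_ ?_
      · rw [Walk.support_reverse, List.mem_reverse]; exact hmem
      · have htl : q.support.tail = (splitFirst q hq0).2.support := by
          conv_lhs => rw [hcons, Walk.support_cons]
          rw [List.tail_cons]
        rw [htl]
        exact Walk.start_mem_support _
    exact ⟨⟨(splitFirst q hq0).1, ⟨(splitFirst q hq0).2, hrlen⟩⟩,
      ⟨⟨w, ⟨p, hplen⟩⟩, hadj, hdu, hynp⟩, hadj,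
      congrArg (fun z => (⟨w, (p, z)⟩ : Σ w : V, G.Walk w u × G.Walk w v)) hcons⟩
  choose bOf fOf hOf eqOf using key
  have hFm : ∀ x : T, (fun z : Σ b : B, Fib b =>
      if h : G.Adj z.2.1.1 z.1.1 then
        some (⟨z.2.1.1, (z.2.1.2.1, Walk.cons h z.1.2.1)⟩ : Σ w : V, G.Walk w u × G.Walk w v)
      else none) ⟨bOf x, fOf x⟩ = some x.1 := by
    intro x
    simp only [dif_pos (hOf x)]
    rw [← eqOf x]
  have hinj : Function.Injective (fun x : T => (⟨bOf x, fOf x⟩ : Σ b : B, Fib b)) := by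
    intro a b he
    have h1 := hFm a
    have h2 := hFm b
    simp only at he
    rw [he] at h1
    rw [h2] at h1
    exact Subtype.ext (Option.some_injective _ h1.symm)
  haveI : ∀ b : B, Finite (Fib b) := fun b => by
    infer_instance
  have hcard1 : Nat.card T ≤ ∑ b : B, Nat.card (Fib b) := by
    rw [← nat_card_sigma]
    exact Nat.card_le_card_of_injective _ hinj
  have hfib : ∀ b : B, (Nat.card (Fib b) : ℝ) ≤ ((s:ℝ)*L+1)^s := by
    intro b
    set Gfib : V → Type := fun w => {p : {p : G.Walk w u // p.length = s} //
        G.Adj w b.1 ∧ G.dist w u = s ∧ b.1 ∉ p.1.support} with hGfib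
    haveI : ∀ w, Finite (Gfib w) := fun w => by infer_instance
    have hmap : Function.Injective (fun c : Fib b =>
        (⟨c.1.1, ⟨c.1.2, c.2.1, c.2.2.1, c.2.2.2⟩⟩ : Σ w, Gfib w)) := by
      intro c c' he
      have h1 := congrArg (fun z : Σ w, Gfib w =>
        (⟨z.1, z.2.1⟩ : Σ w : V, {p : G.Walk w u // p.length = s})) he
      simp only at h1
      exact Subtype.ext h1
    have hc2 : Nat.card (Fib b) ≤ ∑ w : V, Nat.card (Gfib w) := by
      rw [← nat_card_sigma]
      exact Nat.card_le_card_of_injective _ hmap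
    set P : V → Prop := fun w => Nonempty (Gfib w) with hP
    have hW : (Nat.card {w : V // P w} : ℝ) ≤ s * L + 1 :=
      core ℓ L hL hc b.1 u s hs1 hs2 (fun z : {w // P w} => z.1)
        (fun a b hab => Subtype.ext hab)
        (fun z => (Classical.choice z.2).1.1)
        (fun z => ((Classical.choice z.2).2.1).symm)
        (fun z => (Classical.choice z.2).1.2)
        (fun z => (Classical.choice z.2).2.2.1)
        (fun z => (Classical.choice z.2).2.2.2)
    have hper : ∀ w : V, P w → (Nat.card (Gfib w) : ℝ) ≤ ((s:ℝ)*L+1)^(s-1) := by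
      intro w hw
      obtain ⟨p0⟩ := hw
      calc (Nat.card (Gfib w) : ℝ) ≤ (Nat.card {p : G.Walk w u // p.length = s} : ℝ) := by
            exact_mod_cast Nat.card_le_card_of_injective
              (fun p : Gfib w => p.1) (fun a b' hab => Subtype.ext hab)
        _ ≤ _ := sp_bound ℓ L hL hc s hs2 s (le_refl s) w u p0.2.2.1
    have hsum : (∑ w : V, (Nat.card (Gfib w) : ℝ)) ≤ ((s:ℝ)*L+1) * ((s:ℝ)*L+1)^(s-1) := by
      have h0 : ∀ w ∈ Finset.univ, w ∉ Finset.univ.filter P →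
          (Nat.card (Gfib w) : ℝ) = 0 := by
        intro w _ hwn
        have hnp : ¬ P w := fun hp => hwn (Finset.mem_filter.mpr ⟨Finset.mem_univ w, hp⟩)
        haveI : IsEmpty (Gfib w) := not_nonempty_iff.mp hnp
        rw [Nat.card_of_isEmpty, Nat.cast_zero]
      calc (∑ w : V, (Nat.card (Gfib w) : ℝ))
          = ∑ w ∈ Finset.univ.filter P, (Nat.card (Gfib w) : ℝ) :=
            (Finset.sum_subset (Finset.filter_subset _ _) h0).symm
        _ ≤ ∑ _w ∈ Finset.univ.filter P, ((s:ℝ)*L+1)^(s-1) :=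
            Finset.sum_le_sum (fun w hw => hper w (Finset.mem_filter.mp hw).2)
        _ = (Finset.univ.filter P).card * ((s:ℝ)*L+1)^(s-1) := by
            rw [Finset.sum_const, nsmul_eq_mul]
        _ ≤ ((s:ℝ)*L+1) * ((s:ℝ)*L+1)^(s-1) := by
            apply mul_le_mul_of_nonneg_right _ (by positivity)
            have hfc : ((Finset.univ.filter P).card : ℝ) = (Nat.card {w : V // P w} : ℝ) := by
              rw [Nat.card_eq_fintype_card, Fintype.card_subtype]
            rw [hfc]
            exact hW
    calc (Nat.card (Fib b) : ℝ) ≤ ((∑ w : V, Nat.card (Gfib w) : ℕ) : ℝ) := by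
          exact_mod_cast hc2
      _ = ∑ w : V, (Nat.card (Gfib w) : ℝ) := by push_cast; rfl
      _ ≤ ((s:ℝ)*L+1) * ((s:ℝ)*L+1)^(s-1) := hsum
      _ = ((s:ℝ)*L+1)^s := by
          rw [← pow_succ']
          congr 1
          omega
  calc (numComposedPaths G s u v : ℝ)
      = (Nat.card T : ℝ) := by rw [hnum]
    _ ≤ ((∑ b : B, Nat.card (Fib b) : ℕ) : ℝ) := by exact_mod_cast hcard1
    _ = ∑ b : B, (Nat.card (Fib b) : ℝ) := by push_cast; rfl
    _ ≤ ∑ _b : B, ((s:ℝ)*L+1)^s := Finset.sum_le_sum (fun b _ => hfib b)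
    _ = (Fintype.card B : ℝ) * ((s:ℝ)*L+1)^s := by
        rw [Finset.sum_const, nsmul_eq_mul, Finset.card_univ]
    _ ≤ (G.maxDegree : ℝ)^(s-1) * ((s:ℝ)*L+1)^s := by
        apply mul_le_mul_of_nonneg_right _ (by positivity)
        have h1 : Fintype.card B ≤ G.maxDegree ^ (s-1) := by
          rw [← Nat.card_eq_fintype_card]
          exact count_walks_to v (s-1)
        calc (Fintype.card B : ℝ) ≤ ((G.maxDegree ^ (s-1) : ℕ) : ℝ) := by exact_mod_cast h1
          _ = _ := by push_cast; rfl
    _ ≤ (G.maxDegree : ℝ)^(s-1) * (((s:ℝ)*L+1)^s + 1) := by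
        have := pow_nonneg (Nat.cast_nonneg (G.maxDegree) : (0:ℝ) ≤ G.maxDegree) (s-1)
        nlinarith

end Main
end Aux16


/-- Let `ℓ ≥ 2` and `L > 0`, and let `F` be a graph with `c_k(u,v;F) ≤ L` for every edge
`uv` and every `3 ≤ k ≤ 2ℓ`.  Then for every `1 ≤ s ≤ ℓ - 1` and all distinct vertices
`u, v`, the number of composed paths of length `2s` with endpoints `u` and `v` is at most
`Δ(F)^{s-1} · ((sL+1)^s + 1)`. -/
theorem statement_16 (ℓ m : ℕ) (hℓ : 2 ≤ ℓ) (L : ℝ) (hL : 0 < L)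
    (F : SimpleGraph (Fin m)) [DecidableRel F.Adj]
    (hc : ∀ u v, F.Adj u v → ∀ k, 3 ≤ k → k ≤ 2 * ℓ →
      (cyclesThroughEdge F k u v : ℝ) ≤ L) :
    ∀ s, 1 ≤ s → s ≤ ℓ - 1 → ∀ u v : Fin m, u ≠ v →
      (numComposedPaths F s u v : ℝ) ≤
        (F.maxDegree : ℝ) ^ (s - 1) * (((s : ℝ) * L + 1) ^ s + 1) := by
  intro s hs1 hs2 u v _
  exact Aux16.main ℓ L hL hc s hs1 (by omega) u v
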